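/- Fix an integer n ≥ 1 and define Φₙ: ℂ∖{0} → ℂ³ by Φₙ(z) = ( (1+z²)/2, i(1−z²)/2, −z ) · wₙ(z), where wₙ(z) = 1/z² − i(zⁿ + z^{−n})/(2nz). Then for every t ∈ ℝ: Φₙ(e^{it}) = αₙ′(t) − i·βₙ(t), where αₙ′(t) = cos t·(cos t, sin t, −1) and βₙ(t) = (sin t + cos(nt)/n)·(cos t, sin t, −1). -/

import Mathlib

set_option maxHeartbeats 1000000 in
/-- The Weierstrass form `Φₙ(z) = ((1+z²)/2, i(1-z²)/2, -z)·wₙ(z)` with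
`wₙ(z) = 1/z² - i(zⁿ + z^{-n})/(2nz)` extends the boundary data
`αₙ'(t) - i·βₙ(t)` of the perturbed singular Björling problem on the unit circle. -/
theorem stmt_18 (n : ℕ) (hn : 1 ≤ n) (Φn : ℂ → Fin 3 → ℂ) (wn : ℂ → ℂ)
    (hw : ∀ z : ℂ, z ≠ 0 →
      wn z = 1 / z ^ 2 - Complex.I * (z ^ n + (z⁻¹) ^ n) / (2 * n * z))
    (hΦ : ∀ z : ℂ, z ≠ 0 →
      Φn z = fun j => ![(1 + z ^ 2) / 2, Complex.I * (1 - z ^ 2) / 2, -z] j * wn z) :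
    ∀ t : ℝ, ∀ j : Fin 3,
      Φn (Complex.exp (Complex.I * t)) j
        = ((Real.cos t * ![Real.cos t, Real.sin t, -1] j : ℝ) : ℂ)
          - Complex.I *
            (((Real.sin t + Real.cos ((n : ℝ) * t) / n) *
              ![Real.cos t, Real.sin t, -1] j : ℝ) : ℂ) := by
  intro t j
  have hz : Complex.exp (Complex.I * t) ≠ 0 := Complex.exp_ne_zero _
  rw [hΦ _ hz, hw _ hz]
  have hn0 : (n : ℂ) ≠ 0 := Nat.cast_ne_zero.mpr (by omega)
  obtain ⟨E, hE⟩ : ∃ E, Complex.exp ((t : ℂ) * Complex.I) = E := ⟨_, rfl⟩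
  obtain ⟨F, hF⟩ : ∃ F, Complex.exp (-((t : ℂ) * Complex.I)) = F := ⟨_, rfl⟩
  obtain ⟨G, hG⟩ : ∃ G, Complex.exp ((((n : ℝ) * t : ℝ) : ℂ) * Complex.I) = G := ⟨_, rfl⟩
  obtain ⟨H, hH⟩ : ∃ H, Complex.exp (-((((n : ℝ) * t : ℝ) : ℂ) * Complex.I)) = H := ⟨_, rfl⟩
  have hEF : E * F = 1 := by rw [← hE, ← hF, ← Complex.exp_add]; simp
  have hGH : G * H = 1 := by rw [← hG, ← hH, ← Complex.exp_add]; simp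
  have hE0 : E ≠ 0 := hE ▸ Complex.exp_ne_zero _
  have h1 : Complex.exp (Complex.I * t) = E := by rw [← hE, mul_comm]
  have h2 : E ^ n = G := by
    rw [← hE, ← Complex.exp_nat_mul, ← hG]; push_cast; ring_nf
  have h3 : E⁻¹ ^ n = H := by
    rw [← hE, ← Complex.exp_neg, ← Complex.exp_nat_mul, ← hH]; push_cast; ring_nf
  have hct : (Real.cos t : ℂ) = (E + F) / 2 := by
    rw [Complex.ofReal_cos, Complex.cos, hE,
      show -(t:ℂ) * Complex.I = -((t:ℂ)*Complex.I) by ring, hF]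
  have hst : (Real.sin t : ℂ) = (F - E) * Complex.I / 2 := by
    rw [Complex.ofReal_sin, Complex.sin, hE,
      show -(t:ℂ) * Complex.I = -((t:ℂ)*Complex.I) by ring, hF]
  have hcn : (Real.cos ((n : ℝ) * t) : ℂ) = (G + H) / 2 := by
    rw [Complex.ofReal_cos, Complex.cos, hG,
      show -(((n:ℝ)*t : ℝ):ℂ) * Complex.I = -((((n:ℝ)*t:ℝ):ℂ)*Complex.I) by ring, hH]
  rw [h1]
  fin_cases j
  · simp only [Matrix.cons_val_zero, Matrix.cons_val_one, Matrix.head_cons,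
      Matrix.cons_val_two, Matrix.tail_cons, Fin.isValue, Fin.zero_eta, Fin.mk_one,
      Fin.reduceFinMk]
    rw [h2, h3]
    simp only [Complex.ofReal_mul, Complex.ofReal_add, Complex.ofReal_div,
      Complex.ofReal_neg, Complex.ofReal_one, Complex.ofReal_natCast, hct, hst, hcn]
    field_simp [hE0, hn0]
    linear_combination
      (Complex.I*(G+H)*E - 2*(n:ℂ)*(1+E*F) - 2*(n:ℂ)*E^2) * hEF
      + ((n:ℂ)*E^2*(F^2-E^2)) * Complex.I_sq
  · simp only [Matrix.cons_val_zero, Matrix.cons_val_one, Matrix.head_cons,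
      Matrix.cons_val_two, Matrix.tail_cons, Fin.isValue, Fin.zero_eta, Fin.mk_one,
      Fin.reduceFinMk]
    rw [h2, h3]
    simp only [Complex.ofReal_mul, Complex.ofReal_add, Complex.ofReal_div,
      Complex.ofReal_neg, Complex.ofReal_one, Complex.ofReal_natCast, hct, hst, hcn]
    field_simp [hE0, hn0]
    linear_combination
      (Complex.I*(G+H)*E - 2*(n:ℂ)*(1+E*F) + 2*(n:ℂ)*E^2) * hEF
      + ((n:ℂ)*E^2*(F-E)^2) * Complex.I_sq
  · simp only [Matrix.cons_val_zero, Matrix.cons_val_one, Matrix.head_cons,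
      Matrix.cons_val_two, Matrix.tail_cons, Fin.isValue, Fin.zero_eta, Fin.mk_one,
      Fin.reduceFinMk]
    rw [h2, h3]
    simp only [Complex.ofReal_mul, Complex.ofReal_add, Complex.ofReal_div,
      Complex.ofReal_neg, Complex.ofReal_one, Complex.ofReal_natCast, hct, hst, hcn]
    field_simp [hE0, hn0]
    linear_combination
      (2*(n:ℂ)) * hEF
      + ((n:ℂ)*E^2 - (n:ℂ)*E*F) * Complex.I_sq
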